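/- Let G and H be finite groups and let X be a subgroup of G×H. Then X*X° = Δ(p₁(X))·(k₁(X)×{1}) = Δ(p₁(X))·({1}×k₁(X)); equivalently, X*X° equals the subgroup {(g,g') ∈ p₁(X)×p₁(X) : g·k₁(X) = g'·k₁(X)} of G×G. (Here Δ(p₁(X)) normalizes k₁(X)×{1} and {1}×k₁(X), so these products are subgroups.) -/
import Mathlib


open Pointwise

namespace Stmt0
/-- `k₁(X) = {g ∈ G ∣ (g,1) ∈ X}`. -/
def k1 {G H : Type*} [Group G] [Group H] (X : Subgroup (G × H)) : Subgroup G :=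
  X.comap (MonoidHom.inl G H)

/-- `k₂(X) = {h ∈ H ∣ (1,h) ∈ X}`. -/
def k2 {G H : Type*} [Group G] [Group H] (X : Subgroup (G × H)) : Subgroup H :=
  X.comap (MonoidHom.inr G H)

/-- `p₁(X)`, the image of `X` under the first projection. -/
def p1 {G H : Type*} [Group G] [Group H] (X : Subgroup (G × H)) : Subgroup G :=
  X.map (MonoidHom.fst G H)

/-- `p₂(X)`, the image of `X` under the second projection. -/
def p2 {G H : Type*} [Group G] [Group H] (X : Subgroup (G × H)) : Subgroup H :=
  X.map (MonoidHom.snd G H)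

/-- The opposite subgroup `X° = {(h,g) ∣ (g,h) ∈ X}`. -/
def opp {G H : Type*} [Group G] [Group H] (X : Subgroup (G × H)) : Subgroup (H × G) :=
  X.map ((MulEquiv.prodComm : (G × H) ≃* (H × G)).toMonoidHom)

/-- The composition `X*Y` of subgroup correspondences. -/
def comp {G H K : Type*} [Group G] [Group H] [Group K]
    (X : Subgroup (G × H)) (Y : Subgroup (H × K)) : Subgroup (G × K) where
  carrier := {gk | ∃ h : H, (gk.1, h) ∈ X ∧ (h, gk.2) ∈ Y}
  one_mem' := ⟨1, X.one_mem, Y.one_mem⟩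
  mul_mem' := by
    rintro ⟨g, k⟩ ⟨g', k'⟩ ⟨h, hX, hY⟩ ⟨h', hX', hY'⟩
    exact ⟨h * h', X.mul_mem hX hX', Y.mul_mem hY hY'⟩
  inv_mem' := by
    rintro ⟨g, k⟩ ⟨h, hX, hY⟩
    exact ⟨h⁻¹, X.inv_mem hX, Y.inv_mem hY⟩

lemma mem_comp {G H K : Type*} [Group G] [Group H] [Group K]
    {X : Subgroup (G × H)} {Y : Subgroup (H × K)} {x : G × K} :
    x ∈ comp X Y ↔ ∃ h : H, (x.1, h) ∈ X ∧ (h, x.2) ∈ Y := Iff.rfl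

lemma mem_opp {G H : Type*} [Group G] [Group H] {X : Subgroup (G × H)} {x : H × G} :
    x ∈ opp X ↔ (x.2, x.1) ∈ X := by
  rw [opp, Subgroup.mem_map]
  constructor
  · rintro ⟨⟨g, h⟩, hgh, rfl⟩
    simpa using hgh
  · intro hx
    exact ⟨(x.2, x.1), hx, rfl⟩

/-- The diagonal subgroup `Δ(P) = {(g,g) ∣ g ∈ P} ≤ G × G`. -/
def diag {G : Type*} [Group G] (P : Subgroup G) : Subgroup (G × G) :=
  (P.subtype.prod P.subtype).range

/-- The twisted diagonal subgroup `Δ(P,φ,Q) = {(φ y, y) ∣ y ∈ Q} ≤ G × H`. -/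
def tdiag {G H : Type*} [Group G] [Group H] (P : Subgroup G) (Q : Subgroup H)
    (φ : Q ≃* P) : Subgroup (G × H) :=
  ((P.subtype.comp φ.toMonoidHom).prod Q.subtype).range

lemma mem_comp_opp {G H : Type*} [Group G] [Group H] {X : Subgroup (G × H)} {g g' : G} :
    (g, g') ∈ comp X (opp X) ↔ g ∈ p1 X ∧ g' ∈ p1 X ∧ g⁻¹ * g' ∈ k1 X := by
  constructor
  · rintro ⟨h, h1, h2⟩
    rw [mem_opp] at h2
    refine ⟨⟨(g, h), h1, rfl⟩, ⟨(g', h), h2, rfl⟩, ?_⟩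
    have := X.mul_mem (X.inv_mem h1) h2
    simpa [k1, Prod.ext_iff] using this
  · rintro ⟨⟨⟨a, h⟩, ha, rfl⟩, -, hk⟩
    have hk' : ((a⁻¹ * g', 1) : G × H) ∈ X := hk
    refine ⟨h, ha, ?_⟩
    rw [mem_opp]
    have := X.mul_mem ha hk'
    simpa using this

lemma mem_diag {G : Type*} [Group G] {P : Subgroup G} {x : G × G} :
    x ∈ diag P ↔ x.1 ∈ P ∧ x.1 = x.2 := by
  rw [diag, MonoidHom.mem_range]
  constructor
  · rintro ⟨y, rfl⟩
    exact ⟨y.2, rfl⟩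
  · rintro ⟨hx, h⟩
    exact ⟨⟨x.1, hx⟩, by simp [Prod.ext_iff, h]⟩

/-- For a subgroup `X ≤ G × H` of a product of finite groups one has
`X*X° = Δ(p₁(X))·(k₁(X)×{1}) = Δ(p₁(X))·({1}×k₁(X))`; equivalently, `X*X°` is the set of
pairs `(g,g') ∈ p₁(X)×p₁(X)` with `g·k₁(X) = g'·k₁(X)`. -/
theorem stmt0 {G H : Type*} [Group G] [Group H] [Finite G] [Finite H]
    (X : Subgroup (G × H)) :
    ((comp X (opp X) : Subgroup (G × G)) : Set (G × G)) =
        (diag (p1 X) : Set (G × G)) * ((k1 X : Set G) ×ˢ ({1} : Set G)) ∧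
      ((comp X (opp X) : Subgroup (G × G)) : Set (G × G)) =
        (diag (p1 X) : Set (G × G)) * (({1} : Set G) ×ˢ (k1 X : Set G)) ∧
      ∀ g g' : G, ((g, g') ∈ comp X (opp X) ↔
        g ∈ p1 X ∧ g' ∈ p1 X ∧ g • (k1 X : Set G) = g' • (k1 X : Set G)) := by
  have hk1p1 : k1 X ≤ p1 X := fun k hk => ⟨(k, 1), hk, rfl⟩
  refine ⟨?_, ?_, ?_⟩
  · ext ⟨g, g'⟩
    simp only [SetLike.mem_coe, mem_comp_opp, Set.mem_mul, Set.mem_prod, Set.mem_singleton_iff]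
    constructor
    · rintro ⟨hg, hg', hk⟩
      exact ⟨(g', g'), (mem_diag).2 ⟨hg', rfl⟩, ((g'⁻¹ * g), 1),
        ⟨by simpa using (k1 X).inv_mem hk, rfl⟩, by simp [Prod.ext_iff, mul_assoc]⟩
    · rintro ⟨⟨a, b⟩, hd, ⟨c, d⟩, ⟨hc, rfl⟩, heq⟩
      obtain ⟨ha, hb⟩ := (mem_diag).1 hd
      dsimp only at ha hb hc
      subst hb
      obtain ⟨rfl, rfl⟩ : a * c = g ∧ a * 1 = g' := Prod.ext_iff.1 heq
      refine ⟨(p1 X).mul_mem ha (hk1p1 hc), by simpa using ha, ?_⟩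
      simpa using (k1 X).inv_mem hc
  · ext ⟨g, g'⟩
    simp only [SetLike.mem_coe, mem_comp_opp, Set.mem_mul, Set.mem_prod, Set.mem_singleton_iff]
    constructor
    · rintro ⟨hg, hg', hk⟩
      exact ⟨(g, g), (mem_diag).2 ⟨hg, rfl⟩, (1, g⁻¹ * g'),
        ⟨rfl, hk⟩, by simp [Prod.ext_iff, mul_assoc]⟩
    · rintro ⟨⟨a, b⟩, hd, ⟨c, d⟩, ⟨hc1, hd'⟩, heq⟩
      obtain ⟨ha, hb⟩ := (mem_diag).1 hd
      dsimp only at ha hb hd' hc1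
      subst hb; subst hc1
      obtain ⟨rfl, rfl⟩ : a * 1 = g ∧ a * d = g' := Prod.ext_iff.1 heq
      exact ⟨by simpa using ha, (p1 X).mul_mem ha (hk1p1 hd'), by simpa using hd'⟩
  · intro g g'
    rw [mem_comp_opp, leftCoset_eq_iff]


end Stmt0
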